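/- If d_1 ≥ d_2 ≥ … ≥ d_k are nonnegative integers with d_1 + d_2 + … + d_k ≥ Δ(G) − k + 1, then V(G) can be partitioned into k classes V_1,…,V_k such that Δ(G[V_i]) ≤ d_i for each i. -/

import Mathlib

open SimpleGraph

/-- `H` contains a copy of `G`: an injective map preserving adjacency. -/
def ContainsCopy {α β : Type*} (G : SimpleGraph α) (H : SimpleGraph β) : Prop :=
  ∃ f : α ↪ β, ∀ a b, G.Adj a b → H.Adj (f a) (f b)

/-- `H` is `G`-free. -/
def GFree {α β : Type*} (G : SimpleGraph α) (H : SimpleGraph β) : Prop :=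
  ¬ ContainsCopy G H

/-- The `G`-free chromatic number of `H`. -/
noncomputable def gChrom {α β : Type*} (G : SimpleGraph α) (H : SimpleGraph β) : ℕ :=
  sInf {k | ∃ c : β → Fin k, ∀ i, GFree G (H.induce {v | c v = i})}

/-- `H` is `G`-free `k`-critical. -/
def GFreeCritical {α β : Type*} (G : SimpleGraph α) (H : SimpleGraph β) (k : ℕ) : Prop :=
  gChrom G H = k ∧ ∀ F : H.Subgraph, F ≠ ⊤ → gChrom G F.coe ≤ k - 1


open Finset

section Aux
set_option linter.unusedSectionVars false
variable {V : Type*} [Fintype V] [DecidableEq V] (G : SimpleGraph V) [DecidableRel G.Adj]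
  {k : ℕ}

/-- number of neighbors of `v` with color `a`. -/
def nnAux (c : V → Fin k) (v : V) (a : Fin k) : ℕ :=
  ((G.neighborFinset v).filter (fun w => c w = a)).card

/-- twice the number of monochromatic edges. -/
def ssAux (c : V → Fin k) : ℕ := ∑ u, nnAux G c u (c u)

lemma nnAux_as_sum (c : V → Fin k) (v : V) (a : Fin k) :
    nnAux G c v a = ∑ w ∈ G.neighborFinset v, (if c w = a then 1 else 0) := by
  rw [nnAux, Finset.card_filter]

lemma nnAux_erase_sum (c : V → Fin k) (v : V) (a : Fin k) :
    nnAux G c v a =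
      ∑ u ∈ Finset.univ.erase v,
        (if u ∈ G.neighborFinset v then (if c u = a then 1 else 0) else 0) := by
  have hfil : (Finset.univ.erase v).filter (fun u => u ∈ G.neighborFinset v)
      = G.neighborFinset v := by
    ext u
    constructor
    · intro hu
      exact (Finset.mem_filter.1 hu).2
    · intro hu
      refine Finset.mem_filter.2 ⟨Finset.mem_erase.2 ⟨?_, Finset.mem_univ u⟩, hu⟩
      exact fun h => G.notMem_neighborFinset_self v (h ▸ hu)
  rw [nnAux_as_sum, ← hfil, Finset.sum_filter]
  apply Finset.sum_congr rfl
  intro u hu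
  rw [hfil]

lemma keyAux (c : V → Fin k) (v : V) (j : Fin k) :
    ssAux G (Function.update c v j) + 2 * nnAux G c v (c v)
      = ssAux G c + 2 * nnAux G c v j := by
  set c' := Function.update c v j with hc'
  have hcv : ∀ w, w ≠ v → c' w = c w := fun w hw => Function.update_of_ne hw _ _
  have h1 : ssAux G c' = nnAux G c v j + ∑ u ∈ Finset.univ.erase v, nnAux G c' u (c' u) := by
    rw [ssAux, ← Finset.add_sum_erase _ _ (Finset.mem_univ v)]
    congr 1
    have hj : c' v = j := Function.update_self _ _ _
    rw [nnAux_as_sum, nnAux_as_sum, hj]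
    apply Finset.sum_congr rfl
    intro w hw
    rw [hcv w (fun h => G.notMem_neighborFinset_self v (h ▸ hw))]
  have h2 : ssAux G c = nnAux G c v (c v) + ∑ u ∈ Finset.univ.erase v, nnAux G c u (c u) := by
    rw [ssAux, ← Finset.add_sum_erase _ _ (Finset.mem_univ v)]
  have h3 : ∑ u ∈ Finset.univ.erase v, (nnAux G c' u (c' u)
        + (if u ∈ G.neighborFinset v then (if c u = c v then 1 else 0) else 0))
      = ∑ u ∈ Finset.univ.erase v, (nnAux G c u (c u)
        + (if u ∈ G.neighborFinset v then (if c u = j then 1 else 0) else 0)) := by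
    apply Finset.sum_congr rfl
    intro u hu
    have huv : u ≠ v := (Finset.mem_erase.1 hu).1
    rw [hcv u huv]
    by_cases hadj : u ∈ G.neighborFinset v
    · have hvu : v ∈ G.neighborFinset u := by
        rw [SimpleGraph.mem_neighborFinset] at hadj ⊢; exact hadj.symm
      have hNu : G.neighborFinset u = insert v ((G.neighborFinset u).erase v) :=
        (Finset.insert_erase hvu).symm
      rw [nnAux_as_sum, nnAux_as_sum, hNu, Finset.sum_insert (Finset.notMem_erase _ _),
        Finset.sum_insert (Finset.notMem_erase _ _)]
      have hrest : ∑ w ∈ (G.neighborFinset u).erase v, (if c' w = c u then 1 else 0)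
          = ∑ w ∈ (G.neighborFinset u).erase v, (if c w = c u then 1 else 0) := by
        apply Finset.sum_congr rfl
        intro w hw
        rw [hcv w (Finset.mem_erase.1 hw).1]
      have hc'v : c' v = j := Function.update_self _ _ _
      rw [hrest, hc'v, if_pos hadj, if_pos hadj]
      have e1 : (if j = c u then (1:ℕ) else 0) = if c u = j then 1 else 0 := by
        by_cases h : c u = j
        · rw [if_pos h.symm, if_pos h]
        · rw [if_neg (fun h' => h h'.symm), if_neg h]
      have e2 : (if c v = c u then (1:ℕ) else 0) = if c u = c v then 1 else 0 := by
        by_cases h : c u = c v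
        · rw [if_pos h.symm, if_pos h]
        · rw [if_neg (fun h' => h h'.symm), if_neg h]
      omega
    · rw [if_neg hadj, if_neg hadj]
      have hvu : v ∉ G.neighborFinset u := by
        rw [SimpleGraph.mem_neighborFinset] at hadj ⊢
        exact fun h => hadj h.symm
      have : nnAux G c' u (c u) = nnAux G c u (c u) := by
        rw [nnAux_as_sum, nnAux_as_sum]
        apply Finset.sum_congr rfl
        intro w hw
        rw [hcv w (fun h => hvu (h ▸ hw))]
      rw [this]
  rw [h1, h2]
  rw [Finset.sum_add_distrib, Finset.sum_add_distrib] at h3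
  rw [← nnAux_erase_sum, ← nnAux_erase_sum] at h3
  omega

lemma degAux (c : V → Fin k) (v : V) :
    ∑ a, nnAux G c v a = G.degree v := by
  rw [← SimpleGraph.card_neighborFinset_eq_degree]
  exact (Finset.card_eq_sum_card_fiberwise (fun x _ => Finset.mem_univ (c x))).symm

end Aux

set_option linter.unusedVariables false in
theorem stmt3 {V : Type*} [Fintype V] (G : SimpleGraph V) [DecidableRel G.Adj]
    (k : ℕ) (hk : 0 < k) (d : Fin k → ℕ) (hmono : ∀ i j : Fin k, i ≤ j → d j ≤ d i)
    (hsum : ∑ i, d i + k ≥ G.maxDegree + 1) :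
    ∃ c : V → Fin k, ∀ i : Fin k, ∀ v : V, c v = i →
      ((G.neighborFinset v).filter (fun w => c w = i)).card ≤ d i := by
  classical
  haveI : Nonempty (Fin k) := ⟨⟨0, hk⟩⟩
  obtain ⟨c, -, hc⟩ := Finset.exists_min_image (Finset.univ : Finset (V → Fin k))
    (fun c => (ssAux G c : ℤ) - 2 * ((∑ v, d (c v) : ℕ) : ℤ)) Finset.univ_nonempty
  refine ⟨c, fun i v hvi => ?_⟩
  subst hvi
  by_contra hbig
  push_neg at hbig
  change d (c v) < nnAux G c v (c v) at hbig
  have hdeg : ∑ a, nnAux G c v a = G.degree v := degAux G c v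
  have hle : G.degree v ≤ G.maxDegree := G.degree_le_maxDegree v
  have hj : ∃ j, nnAux G c v j ≤ d j := by
    by_contra h
    push_neg at h
    have h1 : ∑ a, (d a + 1) ≤ ∑ a, nnAux G c v a :=
      Finset.sum_le_sum fun a _ => h a
    rw [Finset.sum_add_distrib, Finset.sum_const, Finset.card_univ, Fintype.card_fin,
      smul_eq_mul, mul_one] at h1
    omega
  obtain ⟨j, hj⟩ := hj
  have hkey := keyAux G c v j
  have hΦ := hc (Function.update c v j) (Finset.mem_univ _)
  have hDsum : ∑ u, d (Function.update c v j u) + d (c v) = ∑ u, d (c u) + d j := by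
    rw [← Finset.add_sum_erase _ (fun u => d (Function.update c v j u)) (Finset.mem_univ v),
      ← Finset.add_sum_erase _ (fun u => d (c u)) (Finset.mem_univ v)]
    have : ∑ u ∈ Finset.univ.erase v, d (Function.update c v j u)
        = ∑ u ∈ Finset.univ.erase v, d (c u) := by
      apply Finset.sum_congr rfl
      intro u hu
      rw [Function.update_of_ne (Finset.mem_erase.1 hu).1]
    rw [this, Function.update_self]
    omega
  omega
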